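/- For s = p + 1 + n/2 with integer p ≥ 0, and φ ∈ M with ∫₁^∞ dr/(r φ²(r)) < ∞, the integral ∫_{ℝⁿ}∫_ℝ (1+|ξ|²+|η|)^{p−s} φ^{-2}((1+|ξ|²+|η|)^{1/2}) dξ dη is finite; equivalently, after passing to the variable r = (1+|ξ|²+|η|)^{1/2} the integral reduces up to constants to ∫₁^∞ dr/(r φ²(r)). -/

import Mathlib

open Filter Topology Set MeasureTheory
open scoped ENNReal

def SlowlyVarying (φ : ℝ → ℝ) : Prop :=
  ∀ l : ℝ, 0 < l → Tendsto (fun r => φ (l * r) / φ r) atTop (𝓝 1)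

def MemM (φ : ℝ → ℝ) : Prop :=
  Measurable φ ∧ (∀ r, 1 ≤ r → 0 < φ r) ∧
  (∀ c : ℝ, 1 < c → ∃ m > 0, ∃ M : ℝ, ∀ r ∈ Icc (1:ℝ) c, m ≤ φ r ∧ φ r ≤ M) ∧
  SlowlyVarying φ

noncomputable def wt (n : ℕ) (s : ℝ) (φ : ℝ → ℝ)
    (q : EuclideanSpace ℝ (Fin n) × ℝ) : ℝ :=
  (1 + ‖q.1‖ ^ 2 + |q.2|) ^ s * (φ ((1 + ‖q.1‖ ^ 2 + |q.2|) ^ ((1:ℝ)/2))) ^ 2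

/-- One-dimensional change of variables for the Lebesgue integral. -/
private lemma lintegral_image_abs_deriv {s : Set ℝ} {f f' : ℝ → ℝ}
    (hs : MeasurableSet s) (hf' : ∀ x ∈ s, HasDerivWithinAt f (f' x) s x)
    (hf : InjOn f s) (g : ℝ → ℝ≥0∞) :
    ∫⁻ x in f '' s, g x = ∫⁻ x in s, ENNReal.ofReal |f' x| * g (f x) := by
  simpa only [ContinuousLinearMap.det_toSpanSingleton] using
    lintegral_image_eq_lintegral_abs_det_fderiv_mul volume hs
      (fun x hx => (hf' x hx).hasFDerivWithinAt) hf g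

/-- for `s = p + 1 + n/2` and `φ ∈ M` with `∫₁^∞ dr/(r φ²(r)) < ∞`,
the integral `∫∫ (1+|ξ|²+|η|)^{p-s} φ^{-2}((1+|ξ|²+|η|)^{1/2}) dξ dη` is finite. -/
theorem weight_integral_reduction (n : ℕ) (p : ℕ) (hn : 1 ≤ n) (φ : ℝ → ℝ) (hφ : MemM φ)
    (hint : ∫⁻ r in Ioi (1:ℝ), ENNReal.ofReal (1 / (r * φ r ^ 2)) < ⊤) :
    ∫⁻ q : EuclideanSpace ℝ (Fin n) × ℝ,
      ENNReal.ofReal ((1 + ‖q.1‖ ^ 2 + |q.2|) ^ ((p : ℝ)) /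
        wt n ((p : ℝ) + 1 + (n : ℝ) / 2) φ q) < ⊤ := by
  classical
  obtain ⟨hφm, hφpos, -, -⟩ := hφ
  haveI : Nonempty (Fin n) := ⟨⟨0, hn⟩⟩
  set s : ℝ := (p : ℝ) + 1 + (n : ℝ) / 2 with hs_def
  set g : ℝ → ℝ≥0∞ :=
    fun t => ENNReal.ofReal (t ^ (p : ℝ) / (t ^ s * φ (t ^ ((1:ℝ)/2)) ^ 2)) with hg_def
  have hgm : Measurable g := by
    apply ENNReal.measurable_ofReal.comp
    have h12 : Measurable fun t : ℝ => t ^ ((1:ℝ)/2) :=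
      (Real.continuous_rpow_const (by norm_num)).measurable
    exact ((Real.continuous_rpow_const (by positivity)).measurable).div
      (((Real.continuous_rpow_const (by positivity)).measurable).mul
        ((hφm.comp h12).pow_const 2))
  have goal_eq : (fun q : EuclideanSpace ℝ (Fin n) × ℝ =>
      ENNReal.ofReal ((1 + ‖q.1‖ ^ 2 + |q.2|) ^ (p : ℝ) / wt n s φ q))
      = fun q : EuclideanSpace ℝ (Fin n) × ℝ => g (1 + ‖q.1‖ ^ 2 + |q.2|) := by
    funext q; simp only [wt, hg_def]
  rw [goal_eq]
  -- Step 1: Tonelli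
  have hAc : Continuous fun q : EuclideanSpace ℝ (Fin n) × ℝ => 1 + ‖q.1‖ ^ 2 + |q.2| :=
    (continuous_const.add ((continuous_fst.norm).pow 2)).add continuous_snd.abs
  have hfm : Measurable fun q : EuclideanSpace ℝ (Fin n) × ℝ => g (1 + ‖q.1‖ ^ 2 + |q.2|) :=
    hgm.comp hAc.measurable
  have step1 : ∫⁻ q : EuclideanSpace ℝ (Fin n) × ℝ, g (1 + ‖q.1‖ ^ 2 + |q.2|)
      = ∫⁻ ξ : EuclideanSpace ℝ (Fin n), ∫⁻ η : ℝ, g (1 + ‖ξ‖ ^ 2 + |η|) := by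
    rw [MeasureTheory.Measure.volume_eq_prod, lintegral_prod _ hfm.aemeasurable]
  -- Step 2: integrate in η
  have step2 : ∀ B : ℝ, ∫⁻ η : ℝ, g (B + |η|) = 2 * ∫⁻ t in Ioi B, g t := by
    intro B
    have hshift : ∫⁻ t in Ioi B, g t = ∫⁻ x in Ioi (0:ℝ), g (B + x) := by
      have himage : (fun x : ℝ => B + x) '' Ioi 0 = Ioi B := by
        rw [image_const_add_Ioi, add_zero]
      have hder : ∀ x ∈ Ioi (0:ℝ), HasDerivWithinAt (fun x : ℝ => B + x)
          ((fun _ : ℝ => (1:ℝ)) x) (Ioi 0) x :=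
        fun x _ => ((hasDerivAt_id x).const_add B).hasDerivWithinAt
      rw [← himage, lintegral_image_abs_deriv measurableSet_Ioi hder
        (add_right_injective B).injOn g]
      simp
    have hneg : ∫⁻ t in Iio (0:ℝ), g (B + |t|) = ∫⁻ x in Ioi (0:ℝ), g (B + |x|) := by
      have himage : Neg.neg '' Ioi (0:ℝ) = Iio 0 := by
        rw [image_neg_Ioi, neg_zero]
      have hder : ∀ x ∈ Ioi (0:ℝ), HasDerivWithinAt (fun x : ℝ => -x)
          ((fun _ : ℝ => (-1:ℝ)) x) (Ioi 0) x :=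
        fun x _ => (hasDerivAt_neg x).hasDerivWithinAt
      rw [← himage, lintegral_image_abs_deriv measurableSet_Ioi hder
        neg_injective.injOn _]
      simp [abs_neg]
    have habs : ∫⁻ x in Ioi (0:ℝ), g (B + |x|) = ∫⁻ x in Ioi (0:ℝ), g (B + x) :=
      setLIntegral_congr_fun measurableSet_Ioi
        (fun x hx => by simp only [abs_of_pos (show (0:ℝ) < x from hx)])
    calc ∫⁻ η : ℝ, g (B + |η|)
        = (∫⁻ t in Iio (0:ℝ), g (B + |t|)) + ∫⁻ t in Ici (0:ℝ), g (B + |t|) := by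
          have h := lintegral_add_compl (μ := volume) (fun η : ℝ => g (B + |η|))
            (measurableSet_Iio (a := (0:ℝ)))
          rw [compl_Iio] at h
          exact h.symm
      _ = (∫⁻ x in Ioi (0:ℝ), g (B + x)) + ∫⁻ x in Ioi (0:ℝ), g (B + x) := by
          rw [hneg, habs, setLIntegral_congr (Ioi_ae_eq_Ici (a := (0:ℝ))).symm, habs]
      _ = 2 * ∫⁻ t in Ioi B, g t := by rw [hshift, two_mul]
  -- Step 3: swap and compute volumes
  set S : Set (EuclideanSpace ℝ (Fin n) × ℝ) := {z | 1 + ‖z.1‖ ^ 2 < z.2} with hS_def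
  have hSm : MeasurableSet S :=
    measurableSet_lt ((continuous_const.add ((continuous_fst.norm).pow 2)).measurable)
      measurable_snd
  set F : EuclideanSpace ℝ (Fin n) × ℝ → ℝ≥0∞ := S.indicator (fun z => g z.2) with hF_def
  have hFm : Measurable F := (hgm.comp measurable_snd).indicator hSm
  have hsection : ∀ ξ : EuclideanSpace ℝ (Fin n),
      ∫⁻ t in Ioi (1 + ‖ξ‖ ^ 2), g t = ∫⁻ t : ℝ, F (ξ, t) := by
    intro ξ
    rw [← lintegral_indicator measurableSet_Ioi]
    refine lintegral_congr fun t => ?_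
    by_cases h : 1 + ‖ξ‖ ^ 2 < t
    · simp [hF_def, hS_def, Set.indicator_of_mem, h, mem_Ioi]
    · simp [hF_def, hS_def, Set.indicator_of_notMem, h, mem_Ioi]
  have hswap : ∫⁻ ξ : EuclideanSpace ℝ (Fin n), ∫⁻ t : ℝ, F (ξ, t)
      = ∫⁻ t : ℝ, ∫⁻ ξ : EuclideanSpace ℝ (Fin n), F (ξ, t) :=
    lintegral_lintegral_swap hFm.aemeasurable
  have hsetm : ∀ t : ℝ, MeasurableSet {ξ : EuclideanSpace ℝ (Fin n) | 1 + ‖ξ‖ ^ 2 < t} :=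
    fun t => measurableSet_lt ((continuous_const.add ((continuous_id.norm).pow 2)).measurable)
      measurable_const
  have hfiber : ∀ t : ℝ, ∫⁻ ξ : EuclideanSpace ℝ (Fin n), F (ξ, t)
      = g t * volume {ξ : EuclideanSpace ℝ (Fin n) | 1 + ‖ξ‖ ^ 2 < t} := by
    intro t
    have heq : ∀ ξ : EuclideanSpace ℝ (Fin n),
        F (ξ, t) = {ξ : EuclideanSpace ℝ (Fin n) | 1 + ‖ξ‖ ^ 2 < t}.indicator
          (fun _ => g t) ξ := by
      intro ξ
      by_cases h : 1 + ‖ξ‖ ^ 2 < t <;> simp [hF_def, hS_def, h]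
    simp_rw [heq]
    rw [lintegral_indicator (hsetm t), setLIntegral_const]
  -- the constant from the volume of the unit ball
  set C : ℝ≥0∞ := ENNReal.ofReal (Real.sqrt Real.pi ^ n / Real.Gamma (n / 2 + 1)) with hC_def
  -- pointwise bound
  have hV : ∀ t : ℝ, g t * volume {ξ : EuclideanSpace ℝ (Fin n) | 1 + ‖ξ‖ ^ 2 < t}
      ≤ C * (Ioi (1:ℝ)).indicator
          (fun t => ENNReal.ofReal (1 / (t * φ (t ^ ((1:ℝ)/2)) ^ 2))) t := by
    intro t
    by_cases ht : 1 < t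
    · have ht0 : (0:ℝ) < t := lt_trans one_pos ht
      have hr0 : (0:ℝ) ≤ t ^ ((1:ℝ)/2) := Real.rpow_nonneg ht0.le _
      have hteq : (t ^ ((1:ℝ)/2)) ^ 2 = t := by
        rw [← Real.rpow_natCast (t ^ ((1:ℝ)/2)) 2, ← Real.rpow_mul ht0.le]
        norm_num
      have hsub : {ξ : EuclideanSpace ℝ (Fin n) | 1 + ‖ξ‖ ^ 2 < t}
          ⊆ Metric.ball 0 (t ^ ((1:ℝ)/2)) := by
        intro ξ hξ
        simp only [mem_setOf_eq] at hξ
        rw [Metric.mem_ball, dist_zero_right]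
        nlinarith [norm_nonneg ξ]
      have hvol : volume {ξ : EuclideanSpace ℝ (Fin n) | 1 + ‖ξ‖ ^ 2 < t}
          ≤ ENNReal.ofReal ((t ^ ((1:ℝ)/2)) ^ n) * C := by
        refine le_trans (measure_mono hsub) ?_
        rw [EuclideanSpace.volume_ball, Fintype.card_fin, ENNReal.ofReal_pow hr0, hC_def]
      have hφt : 0 < φ (t ^ ((1:ℝ)/2)) :=
        hφpos _ (Real.one_le_rpow ht.le (by norm_num))
      have harith : t ^ (p : ℝ) / (t ^ s * φ (t ^ ((1:ℝ)/2)) ^ 2) * (t ^ ((1:ℝ)/2)) ^ n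
          = 1 / (t * φ (t ^ ((1:ℝ)/2)) ^ 2) := by
        have h1 : (t ^ ((1:ℝ)/2)) ^ n = t ^ ((n : ℝ)/2) := by
          rw [← Real.rpow_natCast (t ^ ((1:ℝ)/2)) n, ← Real.rpow_mul ht0.le]
          ring_nf
        have h2 : t ^ s = t ^ (p : ℝ) * t ^ ((n : ℝ)/2) * t := by
          have : s = (p : ℝ) + ((n : ℝ)/2 + 1) := by rw [hs_def]; ring
          rw [this, Real.rpow_add ht0, Real.rpow_add ht0, Real.rpow_one, mul_assoc]
        rw [h1, h2]
        have hp0 : (0:ℝ) < t ^ (p : ℝ) := Real.rpow_pos_of_pos ht0 _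
        have hn0 : (0:ℝ) < t ^ ((n : ℝ)/2) := Real.rpow_pos_of_pos ht0 _
        field_simp
      calc g t * volume {ξ : EuclideanSpace ℝ (Fin n) | 1 + ‖ξ‖ ^ 2 < t}
          ≤ g t * (ENNReal.ofReal ((t ^ ((1:ℝ)/2)) ^ n) * C) := by
            exact mul_le_mul_right hvol _
        _ = ENNReal.ofReal (1 / (t * φ (t ^ ((1:ℝ)/2)) ^ 2)) * C := by
            rw [← mul_assoc, hg_def]
            rw [← ENNReal.ofReal_mul (by positivity), harith]
        _ = C * (Ioi (1:ℝ)).indicator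
            (fun t => ENNReal.ofReal (1 / (t * φ (t ^ ((1:ℝ)/2)) ^ 2))) t := by
            rw [Set.indicator_of_mem (mem_Ioi.mpr ht), mul_comm]
    · have hempty : {ξ : EuclideanSpace ℝ (Fin n) | 1 + ‖ξ‖ ^ 2 < t} = ∅ := by
        ext ξ
        simp only [mem_setOf_eq, mem_empty_iff_false, iff_false, not_lt]
        nlinarith [sq_nonneg ‖ξ‖, not_lt.mp ht]
      rw [hempty]
      simp
  -- substitution t = r^2
  have hsub2 : ∫⁻ t in Ioi (1:ℝ), ENNReal.ofReal (1 / (t * φ (t ^ ((1:ℝ)/2)) ^ 2))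
      = 2 * ∫⁻ r in Ioi (1:ℝ), ENNReal.ofReal (1 / (r * φ r ^ 2)) := by
    have himage : (fun x : ℝ => x ^ 2) '' Ioi 1 = Ioi 1 := by
      ext t
      simp only [mem_image, mem_Ioi]
      constructor
      · rintro ⟨r, hr, rfl⟩; nlinarith
      · intro ht
        refine ⟨Real.sqrt t, ?_, Real.sq_sqrt (by linarith)⟩
        have : Real.sqrt 1 < Real.sqrt t := Real.sqrt_lt_sqrt zero_le_one ht
        simpa using this
    have hinj : InjOn (fun x : ℝ => x ^ 2) (Ioi 1) := by
      have h := (pow_left_strictMonoOn₀ (M₀ := ℝ) (n := 2) (by norm_num)).injOn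
      exact h.mono (fun x (hx : x ∈ Ioi (1:ℝ)) => show x ∈ {a : ℝ | 0 ≤ a} from (lt_trans one_pos (mem_Ioi.mp hx) : (0:ℝ) < x).le)
    have hderiv : ∀ x ∈ Ioi (1:ℝ),
        HasDerivWithinAt (fun x : ℝ => x ^ 2) ((fun x : ℝ => 2 * x) x) (Ioi 1) x := by
      intro x _
      have := (hasDerivAt_pow 2 x).hasDerivWithinAt (s := Ioi 1)
      simpa using this
    calc ∫⁻ t in Ioi (1:ℝ), ENNReal.ofReal (1 / (t * φ (t ^ ((1:ℝ)/2)) ^ 2))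
        = ∫⁻ r in Ioi (1:ℝ), ENNReal.ofReal |2 * r| *
            ENNReal.ofReal (1 / ((r ^ 2) * φ ((r ^ 2 : ℝ) ^ ((1:ℝ)/2)) ^ 2)) := by
          conv_lhs => rw [← himage]
          rw [lintegral_image_abs_deriv measurableSet_Ioi hderiv hinj _]
      _ = ∫⁻ r in Ioi (1:ℝ), 2 * ENNReal.ofReal (1 / (r * φ r ^ 2)) := by
          apply setLIntegral_congr_fun measurableSet_Ioi
          intro r hr
          beta_reduce
          have hr0 : (0:ℝ) < r := lt_trans one_pos hr
          have hsq : ((r ^ 2 : ℝ)) ^ ((1:ℝ)/2) = r := by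
            rw [← Real.rpow_natCast r 2, ← Real.rpow_mul hr0.le]
            norm_num
          rw [hsq, abs_of_pos (by positivity)]
          rw [← ENNReal.ofReal_mul (by positivity)]
          have harr : (2 * r) * (1 / (r ^ 2 * φ r ^ 2)) = 2 * (1 / (r * φ r ^ 2)) := by
            by_cases hφr : φ r = 0
            · simp [hφr]
            · field_simp
          rw [harr, ENNReal.ofReal_mul (by norm_num : (0:ℝ) ≤ 2), ENNReal.ofReal_ofNat]
      _ = 2 * ∫⁻ r in Ioi (1:ℝ), ENNReal.ofReal (1 / (r * φ r ^ 2)) := by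
          rw [lintegral_const_mul' 2 _ (by norm_num)]
  -- assemble everything
  have main : ∫⁻ q : EuclideanSpace ℝ (Fin n) × ℝ, g (1 + ‖q.1‖ ^ 2 + |q.2|)
      ≤ 2 * (C * (2 * ∫⁻ r in Ioi (1:ℝ), ENNReal.ofReal (1 / (r * φ r ^ 2)))) := by
    calc ∫⁻ q : EuclideanSpace ℝ (Fin n) × ℝ, g (1 + ‖q.1‖ ^ 2 + |q.2|)
        = ∫⁻ ξ : EuclideanSpace ℝ (Fin n), ∫⁻ η : ℝ, g (1 + ‖ξ‖ ^ 2 + |η|) := step1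
      _ = ∫⁻ ξ : EuclideanSpace ℝ (Fin n), 2 * ∫⁻ t in Ioi (1 + ‖ξ‖ ^ 2), g t := by
          exact lintegral_congr fun ξ => step2 (1 + ‖ξ‖ ^ 2)
      _ = 2 * ∫⁻ ξ : EuclideanSpace ℝ (Fin n), ∫⁻ t in Ioi (1 + ‖ξ‖ ^ 2), g t := by
          rw [lintegral_const_mul' 2 _ (by norm_num)]
      _ = 2 * ∫⁻ t : ℝ, ∫⁻ ξ : EuclideanSpace ℝ (Fin n), F (ξ, t) := by
          rw [← hswap]; exact congrArg (2 * ·) (lintegral_congr hsection)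
      _ = 2 * ∫⁻ t : ℝ, g t * volume {ξ : EuclideanSpace ℝ (Fin n) | 1 + ‖ξ‖ ^ 2 < t} := by
          exact congrArg (2 * ·) (lintegral_congr hfiber)
      _ ≤ 2 * ∫⁻ t : ℝ, C * (Ioi (1:ℝ)).indicator
            (fun t => ENNReal.ofReal (1 / (t * φ (t ^ ((1:ℝ)/2)) ^ 2))) t := by
          exact mul_le_mul_right (lintegral_mono hV) 2
      _ = 2 * (C * ∫⁻ t in Ioi (1:ℝ), ENNReal.ofReal (1 / (t * φ (t ^ ((1:ℝ)/2)) ^ 2))) := by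
          rw [lintegral_const_mul' C _ ENNReal.ofReal_ne_top, lintegral_indicator measurableSet_Ioi]
      _ = 2 * (C * (2 * ∫⁻ r in Ioi (1:ℝ), ENNReal.ofReal (1 / (r * φ r ^ 2)))) := by
          rw [hsub2]
  refine lt_of_le_of_lt main ?_
  refine ENNReal.mul_lt_top (by norm_num) ?_
  refine ENNReal.mul_lt_top ENNReal.ofReal_lt_top ?_
  exact ENNReal.mul_lt_top (by norm_num) hint
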